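/- There exist constants C > 0 and L > 0 such that for all ℓ ≥ L, |∫_0^1 exp(−(ℓ/π)·sin(πs)) ds − 2/ℓ| ≤ C/ℓ³. Consequently, the magnitude |C_ℓ| := (∫_0^1 exp(−(ℓ/π)·sin(πs)) ds)^{−1} of the Euclidean circle of circumference ℓ satisfies |C_ℓ| − ℓ/2 → 0 as ℓ → ∞ (indeed |C_ℓ| = ℓ/2 + O(ℓ^{−1})). -/

import Mathlib

open Filter Topology Asymptotics Real

/-- `x³ ≤ 27 eˣ` for `x ≥ 0`. -/
lemma aux_cube_le_exp {x : ℝ} (hx : 0 ≤ x) : x ^ 3 ≤ 27 * Real.exp x := by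
  have h1 : x / 3 ≤ Real.exp (x / 3) := by
    have := Real.add_one_le_exp (x / 3); linarith
  have h2 : (x / 3) ^ 3 ≤ Real.exp (x / 3) ^ 3 :=
    pow_le_pow_left₀ (by positivity) h1 3
  have h3 : Real.exp (x / 3) ^ 3 = Real.exp x := by
    rw [← Real.exp_nat_mul]; push_cast; ring_nf
  nlinarith [h2, h3]

/-- `t − sin t ≤ t³/6` for `t ≥ 0`. -/
lemma aux_sub_sin {t : ℝ} (ht : 0 ≤ t) : t - Real.sin t ≤ t ^ 3 / 6 := by
  have hd : ∀ x : ℝ, HasDerivAt (fun t : ℝ => t ^ 3 / 6 - t + Real.sin t)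
      (x ^ 2 / 2 - 1 + Real.cos x) x := by
    intro x
    have h1 := ((hasDerivAt_pow 3 x).div_const 6).sub (hasDerivAt_id x)
    have h2 := h1.add (Real.hasDerivAt_sin x)
    exact h2.congr_deriv (by ring)
  have hmono : Monotone (fun t : ℝ => t ^ 3 / 6 - t + Real.sin t) := by
    apply monotone_of_deriv_nonneg
    · exact fun x => (hd x).differentiableAt
    · intro x
      rw [(hd x).deriv]
      have := Real.one_sub_sq_div_two_le_cos (x := x)
      nlinarith
  have := hmono ht
  simp only [Real.sin_zero] at this
  nlinarith [this]

/-- `∫₀¹ exp(−c · min s (1−s)) ds = 2(1 − e^{−c/2})/c`. -/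
lemma aux_min_integral {c : ℝ} (hc : 0 < c) :
    ∫ s in (0:ℝ)..1, Real.exp (-c * min s (1 - s)) = 2 * (1 - Real.exp (-c / 2)) / c := by
  have hcont : Continuous fun s : ℝ => Real.exp (-c * min s (1 - s)) :=
    (Real.continuous_exp.comp ((continuous_const.mul
      (continuous_id.min (continuous_const.sub continuous_id)))))
  have hbase : ∫ s in (0:ℝ)..(1/2 : ℝ), Real.exp (-c * s)
      = (1 - Real.exp (-c / 2)) / c := by
    have : (∫ s in (0:ℝ)..(1/2 : ℝ), Real.exp (-c * s))
        = (-c)⁻¹ • ∫ x in (-c * 0)..(-c * (1/2)), Real.exp x :=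
      intervalIntegral.integral_comp_mul_left Real.exp (by simpa using hc.ne' : (-c : ℝ) ≠ 0)
    rw [this, integral_exp, mul_zero, Real.exp_zero, smul_eq_mul,
      show -c * (1/2 : ℝ) = -c/2 by ring]
    have hc' : c ≠ 0 := hc.ne'
    field_simp
    ring
  have h1 : ∫ s in (0:ℝ)..(1/2 : ℝ), Real.exp (-c * min s (1 - s))
      = (1 - Real.exp (-c / 2)) / c := by
    rw [← hbase]
    apply intervalIntegral.integral_congr
    intro s hs
    rw [Set.uIcc_of_le (by norm_num : (0:ℝ) ≤ 1/2)] at hs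
    have hm : min s (1 - s) = s := min_eq_left (by linarith [hs.1, hs.2])
    simp only [hm]
  have h2 : ∫ s in (1/2 : ℝ)..1, Real.exp (-c * min s (1 - s))
      = (1 - Real.exp (-c / 2)) / c := by
    have e1 : ∫ s in (1/2 : ℝ)..1, Real.exp (-c * min s (1 - s))
        = ∫ s in (1/2 : ℝ)..1, Real.exp (-c * (1 - s)) := by
      apply intervalIntegral.integral_congr
      intro s hs
      rw [Set.uIcc_of_le (by norm_num : (1/2:ℝ) ≤ 1)] at hs
      have hm : min s (1 - s) = 1 - s := min_eq_right (by linarith [hs.1, hs.2])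
      simp only [hm]
    have e2 : ∫ s in (1/2 : ℝ)..1, Real.exp (-c * (1 - s))
        = ∫ x in (1-(1:ℝ))..(1-(1/2:ℝ)), Real.exp (-c * x) :=
      intervalIntegral.integral_comp_sub_left (fun u => Real.exp (-c * u)) 1
    rw [e1, e2, show (1:ℝ)-1 = 0 by norm_num, show (1:ℝ)-1/2 = 1/2 by norm_num]
    exact hbase
  have hsplit := intervalIntegral.integral_add_adjacent_intervals
    (μ := MeasureTheory.volume) (a := (0:ℝ)) (b := (1/2:ℝ)) (c := (1:ℝ))
    (f := fun s => Real.exp (-c * min s (1 - s)))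
    (hcont.intervalIntegrable _ _) (hcont.intervalIntegrable _ _)
  rw [h1, h2] at hsplit
  rw [← hsplit]
  ring


lemma aux_pointwise {ℓ : ℝ} (hℓ : 1 ≤ ℓ) {s : ℝ} (hs : s ∈ Set.Icc (0:ℝ) 1) :
    |Real.exp (-(ℓ / π) * Real.sin (π * s)) - Real.exp (-ℓ * min s (1 - s))|
      ≤ (9 * π ^ 5 / (2 * ℓ ^ 2)) * Real.exp (-(ℓ / π) * min s (1 - s)) := by
  have hπ := Real.pi_pos
  have hl0 : (0:ℝ) < ℓ := by linarith
  obtain ⟨hs0, hs1⟩ := hs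
  set m := min s (1 - s) with hmdef
  have hm0 : 0 ≤ m := le_min hs0 (by linarith)
  have hm2 : m ≤ 1/2 := by
    rcases le_total s (1/2) with h | h
    · exact le_trans (min_le_left _ _) h
    · exact le_trans (min_le_right _ _) (by linarith)
  have hsin : Real.sin (π * s) = Real.sin (π * m) := by
    rcases le_total s (1/2) with h | h
    · rw [hmdef, min_eq_left (by linarith)]
    · rw [hmdef, min_eq_right (by linarith),
        show π * s = π - π * (1 - s) by ring, Real.sin_pi_sub]
  set x := ℓ / π * Real.sin (π * m) with hxdef
  set y := ℓ * m with hydef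
  have hsin_le : Real.sin (π * m) ≤ π * m := Real.sin_le (by positivity)
  have h2m : 2 * m ≤ Real.sin (π * m) := by
    have h := Real.mul_le_sin (x := π * m) (by positivity) (by nlinarith)
    have : 2 / π * (π * m) = 2 * m := by field_simp
    linarith [this ▸ h]
  have hxy : x ≤ y := by
    rw [hxdef, hydef]
    calc ℓ / π * Real.sin (π * m) ≤ ℓ / π * (π * m) := by
          apply mul_le_mul_of_nonneg_left hsin_le (by positivity)
      _ = ℓ * m := by field_simp
  have hx2 : 2 * (ℓ / π) * m ≤ x := by
    rw [hxdef]
    calc 2 * (ℓ / π) * m = (ℓ / π) * (2 * m) := by ring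
      _ ≤ (ℓ / π) * Real.sin (π * m) := by
          apply mul_le_mul_of_nonneg_left h2m (by positivity)
  have hcube : π * m - Real.sin (π * m) ≤ (π * m) ^ 3 / 6 := aux_sub_sin (by positivity)
  -- difference of exponentials
  have e1 : Real.exp (-x) - Real.exp (-y) ≤ (y - x) * Real.exp (-x) := by
    have h1 : 1 + -(y - x) ≤ Real.exp (-(y - x)) := by
      have := Real.add_one_le_exp (-(y - x)); linarith
    have h2 : Real.exp (-y) = Real.exp (-x) * Real.exp (-(y - x)) := by
      rw [← Real.exp_add]; ring_nf
    nlinarith [Real.exp_pos (-x)]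
  have e0 : 0 ≤ Real.exp (-x) - Real.exp (-y) := by
    have : Real.exp (-y) ≤ Real.exp (-x) := Real.exp_le_exp.mpr (by linarith)
    linarith
  have habs : |Real.exp (-x) - Real.exp (-y)| = Real.exp (-x) - Real.exp (-y) :=
    abs_of_nonneg e0
  -- bound y - x
  have hyx : y - x ≤ ℓ * π ^ 2 * m ^ 3 / 6 := by
    have : y - x = (ℓ / π) * (π * m - Real.sin (π * m)) := by
      rw [hxdef, hydef]; field_simp
    rw [this]
    calc (ℓ / π) * (π * m - Real.sin (π * m)) ≤ (ℓ / π) * ((π * m) ^ 3 / 6) := by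
          apply mul_le_mul_of_nonneg_left hcube (by positivity)
      _ = ℓ * π ^ 2 * m ^ 3 / 6 := by field_simp
  -- bound exp(-x)
  have hex : Real.exp (-x) ≤ Real.exp (-(ℓ/π) * m) * Real.exp (-(ℓ/π) * m) := by
    rw [← Real.exp_add]
    apply Real.exp_le_exp.mpr
    nlinarith [hx2]
  -- cube bound
  have hm3 : m ^ 3 * Real.exp (-(ℓ/π) * m) ≤ 27 * (π / ℓ) ^ 3 := by
    have h1 : ((ℓ/π) * m) ^ 3 ≤ 27 * Real.exp ((ℓ/π) * m) := aux_cube_le_exp (by positivity)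
    have h2 : Real.exp ((ℓ/π) * m) * Real.exp (-(ℓ/π) * m) = 1 := by
      rw [← Real.exp_add]; ring_nf; exact Real.exp_zero
    have h3 : m ^ 3 = ((ℓ/π) * m) ^ 3 * (π / ℓ) ^ 3 := by field_simp
    rw [h3]
    calc ((ℓ/π) * m) ^ 3 * (π / ℓ) ^ 3 * Real.exp (-(ℓ/π) * m)
        ≤ 27 * Real.exp ((ℓ/π) * m) * (π / ℓ) ^ 3 * Real.exp (-(ℓ/π) * m) := by
          have hp : (0:ℝ) < (π / ℓ) ^ 3 := by positivity
          exact mul_le_mul_of_nonneg_right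
            (mul_le_mul_of_nonneg_right h1 hp.le) (Real.exp_pos _).le
      _ = 27 * (π / ℓ) ^ 3 * (Real.exp ((ℓ/π) * m) * Real.exp (-(ℓ/π) * m)) := by ring
      _ = 27 * (π / ℓ) ^ 3 := by rw [h2, mul_one]
  -- put it together
  have key : Real.exp (-x) - Real.exp (-y)
      ≤ (9 * π ^ 5 / (2 * ℓ ^ 2)) * Real.exp (-(ℓ/π) * m) := by
    have hE : (0:ℝ) < Real.exp (-(ℓ/π) * m) := Real.exp_pos _
    calc Real.exp (-x) - Real.exp (-y) ≤ (y - x) * Real.exp (-x) := e1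
      _ ≤ (ℓ * π ^ 2 * m ^ 3 / 6) * (Real.exp (-(ℓ/π) * m) * Real.exp (-(ℓ/π) * m)) := by
          apply mul_le_mul hyx hex (Real.exp_pos _).le (by positivity)
      _ = (ℓ * π ^ 2 / 6) * (m ^ 3 * Real.exp (-(ℓ/π) * m)) * Real.exp (-(ℓ/π) * m) := by
          ring
      _ ≤ (ℓ * π ^ 2 / 6) * (27 * (π / ℓ) ^ 3) * Real.exp (-(ℓ/π) * m) := by
          apply mul_le_mul_of_nonneg_right _ hE.le
          apply mul_le_mul_of_nonneg_left hm3 (by positivity)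
      _ = (9 * π ^ 5 / (2 * ℓ ^ 2)) * Real.exp (-(ℓ/π) * m) := by
          field_simp; ring
  have hFx : Real.exp (-(ℓ / π) * Real.sin (π * s)) = Real.exp (-x) := by
    rw [hsin, hxdef]; ring_nf
  have hGy : Real.exp (-ℓ * m) = Real.exp (-y) := by rw [hydef]; ring_nf
  rw [hFx, hGy, habs]
  exact key

lemma aux_main {ℓ : ℝ} (hℓ : 1 ≤ ℓ) :
    |(∫ s in (0:ℝ)..1, Real.exp (-(ℓ / π) * Real.sin (π * s))) - 2 / ℓ|
      ≤ (9 * π ^ 6 + 432) / ℓ ^ 3 := by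
  have hπ := Real.pi_pos
  have hl0 : (0:ℝ) < ℓ := by linarith
  have hFc : Continuous fun s : ℝ => Real.exp (-(ℓ / π) * Real.sin (π * s)) := by
    continuity
  have hGc : Continuous fun s : ℝ => Real.exp (-ℓ * min s (1 - s)) :=
    Real.continuous_exp.comp (continuous_const.mul
      (continuous_id.min (continuous_const.sub continuous_id)))
  have hEc : Continuous fun s : ℝ => Real.exp (-(ℓ / π) * min s (1 - s)) :=
    Real.continuous_exp.comp (continuous_const.mul
      (continuous_id.min (continuous_const.sub continuous_id)))
  have hBc : Continuous fun s : ℝ =>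
      (9 * π ^ 5 / (2 * ℓ ^ 2)) * Real.exp (-(ℓ / π) * min s (1 - s)) :=
    continuous_const.mul hEc
  -- integral of G
  have hG : ∫ s in (0:ℝ)..1, Real.exp (-ℓ * min s (1 - s))
      = 2 * (1 - Real.exp (-ℓ / 2)) / ℓ := aux_min_integral hl0
  -- integral of E
  have hE : ∫ s in (0:ℝ)..1, Real.exp (-(ℓ / π) * min s (1 - s))
      = 2 * (1 - Real.exp (-(ℓ / π) / 2)) / (ℓ / π) := aux_min_integral (by positivity)
  -- |∫F - ∫G| ≤ ∫B
  have step1 : |(∫ s in (0:ℝ)..1, Real.exp (-(ℓ / π) * Real.sin (π * s)))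
      - ∫ s in (0:ℝ)..1, Real.exp (-ℓ * min s (1 - s))|
      ≤ ∫ s in (0:ℝ)..1,
        (9 * π ^ 5 / (2 * ℓ ^ 2)) * Real.exp (-(ℓ / π) * min s (1 - s)) := by
    rw [← intervalIntegral.integral_sub (hFc.intervalIntegrable _ _)
      (hGc.intervalIntegrable _ _)]
    calc |∫ s in (0:ℝ)..1, (Real.exp (-(ℓ / π) * Real.sin (π * s))
          - Real.exp (-ℓ * min s (1 - s)))|
        ≤ ∫ s in (0:ℝ)..1, |Real.exp (-(ℓ / π) * Real.sin (π * s))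
          - Real.exp (-ℓ * min s (1 - s))| :=
          intervalIntegral.abs_integral_le_integral_abs zero_le_one
      _ ≤ ∫ s in (0:ℝ)..1,
          (9 * π ^ 5 / (2 * ℓ ^ 2)) * Real.exp (-(ℓ / π) * min s (1 - s)) := by
          apply intervalIntegral.integral_mono_on zero_le_one
            ((hFc.sub hGc).abs.intervalIntegrable _ _) (hBc.intervalIntegrable _ _)
          exact fun s hs => aux_pointwise hℓ hs
  -- evaluate ∫B and bound it
  have step2 : ∫ s in (0:ℝ)..1,
      (9 * π ^ 5 / (2 * ℓ ^ 2)) * Real.exp (-(ℓ / π) * min s (1 - s))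
      ≤ 9 * π ^ 6 / ℓ ^ 3 := by
    rw [intervalIntegral.integral_const_mul, hE]
    have h1 : 2 * (1 - Real.exp (-(ℓ / π) / 2)) / (ℓ / π) ≤ 2 * π / ℓ := by
      have hp : (0:ℝ) < ℓ / π := by positivity
      rw [div_le_iff₀ hp]
      have := (Real.exp_pos (-(ℓ / π) / 2)).le
      have h2 : 2 * (1 - Real.exp (-(ℓ / π) / 2)) ≤ 2 := by linarith
      calc 2 * (1 - Real.exp (-(ℓ / π) / 2)) ≤ 2 := h2
        _ = 2 * π / ℓ * (ℓ / π) := by field_simp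
    calc 9 * π ^ 5 / (2 * ℓ ^ 2) * (2 * (1 - Real.exp (-(ℓ / π) / 2)) / (ℓ / π))
        ≤ 9 * π ^ 5 / (2 * ℓ ^ 2) * (2 * π / ℓ) := by
          apply mul_le_mul_of_nonneg_left h1 (by positivity)
      _ = 9 * π ^ 6 / ℓ ^ 3 := by field_simp
  -- |∫G - 2/ℓ| ≤ 432/ℓ³
  have step3 : |(∫ s in (0:ℝ)..1, Real.exp (-ℓ * min s (1 - s))) - 2 / ℓ|
      ≤ 432 / ℓ ^ 3 := by
    rw [hG]
    have hval : 2 * (1 - Real.exp (-ℓ / 2)) / ℓ - 2 / ℓ = -(2 * Real.exp (-ℓ / 2) / ℓ) := by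
      field_simp; ring
    rw [hval, abs_neg, abs_of_nonneg (by positivity)]
    -- exp(-ℓ/2) ≤ 216 / ℓ³
    have hcube : (ℓ / 2) ^ 3 ≤ 27 * Real.exp (ℓ / 2) := aux_cube_le_exp (by positivity)
    have h216 : Real.exp (-ℓ / 2) ≤ 216 / ℓ ^ 3 := by
      rw [show -ℓ / 2 = -(ℓ / 2) by ring, Real.exp_neg, inv_eq_one_div,
        div_le_div_iff₀ (Real.exp_pos _) (by positivity)]
      nlinarith [hcube]
    calc 2 * Real.exp (-ℓ / 2) / ℓ ≤ 2 * (216 / ℓ ^ 3) / ℓ := by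
          gcongr
      _ = 432 / ℓ ^ 4 := by ring
      _ ≤ 432 / ℓ ^ 3 := by
          apply div_le_div_of_nonneg_left (by norm_num) (by positivity)
          nlinarith [pow_nonneg hl0.le 3]
  calc |(∫ s in (0:ℝ)..1, Real.exp (-(ℓ / π) * Real.sin (π * s))) - 2 / ℓ|
      ≤ |(∫ s in (0:ℝ)..1, Real.exp (-(ℓ / π) * Real.sin (π * s)))
        - ∫ s in (0:ℝ)..1, Real.exp (-ℓ * min s (1 - s))|
        + |(∫ s in (0:ℝ)..1, Real.exp (-ℓ * min s (1 - s))) - 2 / ℓ| := by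
        exact abs_sub_le _ _ _
    _ ≤ 9 * π ^ 6 / ℓ ^ 3 + 432 / ℓ ^ 3 := add_le_add (step1.trans step2) step3
    _ = (9 * π ^ 6 + 432) / ℓ ^ 3 := by ring

lemma aux_inv {ℓ : ℝ} (h1 : 1 ≤ ℓ) (hC : 9 * π ^ 6 + 432 ≤ ℓ) :
    |(∫ s in (0:ℝ)..1, Real.exp (-(ℓ / π) * Real.sin (π * s)))⁻¹ - ℓ / 2|
      ≤ (9 * π ^ 6 + 432) * |ℓ⁻¹| := by
  have hπ := Real.pi_pos
  have hl0 : (0:ℝ) < ℓ := by linarith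
  set C : ℝ := 9 * π ^ 6 + 432 with hCdef
  have hC0 : (0:ℝ) < C := by positivity
  set J : ℝ := ∫ s in (0:ℝ)..1, Real.exp (-(ℓ / π) * Real.sin (π * s)) with hJdef
  have hmain : |J - 2 / ℓ| ≤ C / ℓ ^ 3 := aux_main h1
  have hCl : C / ℓ ^ 3 ≤ 1 / ℓ := by
    rw [div_le_div_iff₀ (by positivity) hl0]
    nlinarith [sq_nonneg ℓ, sq_nonneg (ℓ - 1)]
  have hJlb : 1 / ℓ ≤ J := by
    have h2 : 2 / ℓ - C / ℓ ^ 3 ≤ J := by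
      have := abs_le.mp hmain
      linarith [this.1]
    have : 2 / ℓ - 1 / ℓ ≤ J := by linarith
    calc 1 / ℓ = 2 / ℓ - 1 / ℓ := by ring
      _ ≤ J := this
  have hJpos : 0 < J := lt_of_lt_of_le (by positivity) hJlb
  have heq : J⁻¹ - ℓ / 2 = (2 - ℓ * J) / (2 * J) := by
    field_simp
  have habs2 : |2 - ℓ * J| ≤ C / ℓ ^ 2 := by
    have : 2 - ℓ * J = -(ℓ * (J - 2 / ℓ)) := by field_simp; ring
    rw [this, abs_neg, abs_mul, abs_of_pos hl0]
    calc ℓ * |J - 2 / ℓ| ≤ ℓ * (C / ℓ ^ 3) := by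
          apply mul_le_mul_of_nonneg_left hmain hl0.le
      _ = C / ℓ ^ 2 := by field_simp
  have hfinal : |J⁻¹ - ℓ / 2| ≤ C / (2 * ℓ) := by
    rw [heq, abs_div, abs_of_pos (by positivity : (0:ℝ) < 2 * J)]
    calc |2 - ℓ * J| / (2 * J) ≤ (C / ℓ ^ 2) / (2 * J) := by
          gcongr
      _ ≤ (C / ℓ ^ 2) / (2 / ℓ) := by
          apply div_le_div_of_nonneg_left (by positivity) (by positivity)
          have h2l : 2 / ℓ = 2 * (1 / ℓ) := by ring
          linarith [hJlb]
      _ = C / (2 * ℓ) := by field_simp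
  calc |J⁻¹ - ℓ / 2| ≤ C / (2 * ℓ) := hfinal
    _ ≤ C / ℓ := by
        apply div_le_div_of_nonneg_left hC0.le hl0
        linarith
    _ = C * |ℓ⁻¹| := by
        rw [abs_of_pos (by positivity : (0:ℝ) < ℓ⁻¹)]
        field_simp

/-- Laplace-method asymptotics for the Euclidean circle: there are constants `C, L > 0`
such that `|∫_0^1 exp(−(ℓ/π) sin(πs)) ds − 2/ℓ| ≤ C/ℓ³` for all `ℓ ≥ L`.  Consequently
the magnitude `|C_ℓ| = (∫_0^1 exp(−(ℓ/π) sin(πs)) ds)⁻¹` of the Euclidean circle of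
circumference `ℓ` satisfies `|C_ℓ| − ℓ/2 → 0` as `ℓ → ∞`; indeed
`|C_ℓ| = ℓ/2 + O(ℓ⁻¹)`. -/
theorem euclidean_circle_asymptotics :
    (∃ C > (0 : ℝ), ∃ L > (0 : ℝ), ∀ ℓ ≥ L,
      |(∫ s in (0 : ℝ)..1, Real.exp (-(ℓ / Real.pi) * Real.sin (Real.pi * s))) - 2 / ℓ|
        ≤ C / ℓ ^ 3) ∧
    Tendsto
      (fun ℓ : ℝ =>
        (∫ s in (0 : ℝ)..1, Real.exp (-(ℓ / Real.pi) * Real.sin (Real.pi * s)))⁻¹ - ℓ / 2)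
      atTop (𝓝 0) ∧
    (fun ℓ : ℝ =>
        (∫ s in (0 : ℝ)..1, Real.exp (-(ℓ / Real.pi) * Real.sin (Real.pi * s)))⁻¹ - ℓ / 2)
      =O[atTop] (fun ℓ : ℝ => ℓ⁻¹) := by
  have hπ := Real.pi_pos
  have hbigO : (fun ℓ : ℝ =>
      (∫ s in (0 : ℝ)..1, Real.exp (-(ℓ / Real.pi) * Real.sin (Real.pi * s)))⁻¹ - ℓ / 2)
      =O[atTop] (fun ℓ : ℝ => ℓ⁻¹) := by
    rw [isBigO_iff]
    refine ⟨9 * π ^ 6 + 432, ?_⟩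
    filter_upwards [eventually_ge_atTop (max 1 (9 * π ^ 6 + 432))] with ℓ hℓ
    have h1 : 1 ≤ ℓ := le_trans (le_max_left _ _) hℓ
    have h2 : 9 * π ^ 6 + 432 ≤ ℓ := le_trans (le_max_right _ _) hℓ
    have := aux_inv h1 h2
    rw [abs_inv] at this
    simpa [Real.norm_eq_abs] using this
  refine ⟨⟨9 * π ^ 6 + 432, by positivity, 1, one_pos, fun ℓ hℓ => aux_main hℓ⟩, ?_, hbigO⟩
  exact hbigO.trans_tendsto tendsto_inv_atTop_zero
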